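/- A graph is 12-representable by a 321-avoiding word if and only if it is a bipartite permutation graph, i.e., it is isomorphic to the permutation graph of some permutation and contains no odd cycle. -/

import Mathlib

/-- Every occurrence of `j` precedes every occurrence of `i` in the word `w`. -/
def EveryBeforeF {n : ℕ} (w : List (Fin n)) (j i : Fin n) : Prop :=
  ∀ p q : Fin w.length, w.get p = j → w.get q = i → p < q

/-- The word `w` over `Fin n` 12-represents the graph `G` on `Fin n`:
`w` contains each letter at least once, and for `i < j`, `i` and `j` are adjacent
iff every `j` occurs before every `i` in `w`. -/
def RepF {n : ℕ} (G : SimpleGraph (Fin n)) (w : List (Fin n)) : Prop :=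
  (∀ i : Fin n, i ∈ w) ∧
  (∀ i j : Fin n, i < j → (G.Adj i j ↔ EveryBeforeF w j i))

/-- `w` avoids the pattern 321: no strictly decreasing subsequence of length 3. -/
def Avoids321F {n : ℕ} (w : List (Fin n)) : Prop :=
  ¬ ∃ p q r : Fin w.length, p < q ∧ q < r ∧ w.get r < w.get q ∧ w.get q < w.get p

/-- The permutation graph of `π`: `i < j` are adjacent iff `j` occurs before `i`
in the one-line listing of `π`, i.e. `π⁻¹ j < π⁻¹ i`. -/
def PermGraph {n : ℕ} (π : Equiv.Perm (Fin n)) : SimpleGraph (Fin n) :=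
  SimpleGraph.fromRel (fun i j => i < j ∧ π.symm j < π.symm i)

/-- Auxiliary two-level relation: the elements not satisfying `P` come first,
compared by key `k`; the elements satisfying `P` come last, compared by label. -/
def Rel2 {n : ℕ} (P : Fin n → Prop) (k : Fin n → ℕ) (u v : Fin n) : Prop :=
  (¬ P u ∧ ¬ P v ∧ k u < k v) ∨ (¬ P u ∧ P v) ∨ (P u ∧ P v ∧ u.val < v.val)

theorem rel2_trans {n : ℕ} (P : Fin n → Prop) (k : Fin n → ℕ) :
    ∀ a b c : Fin n, Rel2 P k a b → Rel2 P k b c → Rel2 P k a c := by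
  intro a b c h1 h2
  rcases h1 with ⟨ha, hb, hk⟩ | ⟨ha, hb⟩ | ⟨ha, hb, hl⟩ <;>
    rcases h2 with ⟨hb', hc, hk'⟩ | ⟨hb', hc⟩ | ⟨hb', hc, hl'⟩ <;>
    first
      | exact absurd hb' hb
      | exact absurd hb hb'
      | exact Or.inl ⟨ha, hc, lt_trans hk hk'⟩
      | exact Or.inr (Or.inl ⟨ha, hc⟩)
      | exact Or.inr (Or.inr ⟨ha, hc, lt_trans hl hl'⟩)

theorem rel2_irrefl {n : ℕ} (P : Fin n → Prop) (k : Fin n → ℕ) :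
    ∀ a : Fin n, ¬ Rel2 P k a a := by
  rintro a (⟨-, -, h⟩ | ⟨h1, h2⟩ | ⟨-, -, h⟩)
  · exact lt_irrefl _ h
  · exact h1 h2
  · exact lt_irrefl _ h

theorem rel2_total {n : ℕ} (P : Fin n → Prop) (k : Fin n → ℕ)
    (hinj : ∀ a b, k a = k b → a = b) :
    ∀ a b : Fin n, a ≠ b → Rel2 P k a b ∨ Rel2 P k b a := by
  intro a b hne
  by_cases ha : P a <;> by_cases hb : P b
  · rcases Nat.lt_trichotomy a.val b.val with h | h | h
    · exact Or.inl (Or.inr (Or.inr ⟨ha, hb, h⟩))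
    · exact absurd (Fin.ext h) hne
    · exact Or.inr (Or.inr (Or.inr ⟨hb, ha, h⟩))
  · exact Or.inr (Or.inr (Or.inl ⟨hb, ha⟩))
  · exact Or.inl (Or.inr (Or.inl ⟨ha, hb⟩))
  · rcases Nat.lt_trichotomy (k a) (k b) with h | h | h
    · exact Or.inl (Or.inl ⟨ha, hb, h⟩)
    · exact absurd (hinj a b h) hne
    · exact Or.inr (Or.inl ⟨hb, ha, h⟩)

/-- Any strict total order on `Fin n` is realized by a permutation ranking. -/
theorem exists_rank {n : ℕ} (r : Fin n → Fin n → Prop)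
    (htr : ∀ a b c, r a b → r b c → r a c)
    (hirr : ∀ a, ¬ r a a)
    (htot : ∀ a b, a ≠ b → r a b ∨ r b a) :
    ∃ e : Equiv.Perm (Fin n), ∀ a b, r a b ↔ e a < e b := by
  classical
  have hmono : ∀ a b, r a b →
      (Finset.univ.filter fun x => r x a).card < (Finset.univ.filter fun x => r x b).card := by
    intro a b hab
    apply Finset.card_lt_card
    rw [Finset.ssubset_iff_of_subset]
    · exact ⟨a, by simp [hab], by simp [hirr a]⟩
    · intro x hx
      simp only [Finset.mem_filter, Finset.mem_univ, true_and] at hx ⊢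
      exact htr x a b hx hab
  have hlt : ∀ a : Fin n, (Finset.univ.filter fun x => r x a).card < n := by
    intro a
    calc (Finset.univ.filter fun x => r x a).card
        ≤ (Finset.univ.erase a).card := Finset.card_le_card (by
          intro x hx
          simp only [Finset.mem_filter, Finset.mem_univ, true_and] at hx
          exact Finset.mem_erase.mpr ⟨fun h => hirr a (h ▸ hx), Finset.mem_univ x⟩)
      _ < Finset.univ.card := Finset.card_erase_lt_of_mem (Finset.mem_univ a)
      _ = n := by simp
  set f : Fin n → Fin n := fun a => ⟨_, hlt a⟩ with hf
  have hinj : Function.Injective f := by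
    intro a b hab
    by_contra hne
    have hcard : (Finset.univ.filter fun x => r x a).card
        = (Finset.univ.filter fun x => r x b).card := congrArg Fin.val hab
    rcases htot a b hne with h | h
    · exact absurd hcard (Nat.ne_of_lt (hmono a b h))
    · exact absurd hcard.symm (Nat.ne_of_lt (hmono b a h))
  have hbij : Function.Bijective f := Finite.injective_iff_bijective.mp hinj
  refine ⟨Equiv.ofBijective f hbij, fun a b => ?_⟩
  constructor
  · intro h
    show f a < f b
    exact Fin.mk_lt_mk.mpr (hmono a b h)
  · intro h
    by_contra hr
    rcases eq_or_ne a b with rfl | hne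
    · exact absurd h (lt_irrefl _)
    · rcases htot a b hne with h' | h'
      · exact hr h'
      · have : f b < f a := Fin.mk_lt_mk.mpr (hmono b a h')
        exact absurd h (not_lt.mpr (le_of_lt this))

/-- Main combinatorial lemma: a graph 12-represented by a 321-avoiding word is
(label-isomorphically) a permutation graph, and is 2-colorable. -/
theorem forward_aux {n : ℕ} (H : SimpleGraph (Fin n)) (w : List (Fin n))
    (hA : Avoids321F w) (hR : RepF H w) :
    (∃ π : Equiv.Perm (Fin n), ∃ e : Fin n ≃ Fin n,
      ∀ x y : Fin n, H.Adj x y ↔ (PermGraph π).Adj (e x) (e y)) ∧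
    (∃ C : Fin n → Fin 2, ∀ x y : Fin n, H.Adj x y → C x ≠ C y) := by
  classical
  have hne : ∀ v : Fin n, (Finset.univ.filter fun p : Fin w.length => w.get p = v).Nonempty := by
    intro v
    obtain ⟨p, hp⟩ := List.mem_iff_get.mp (hR.1 v)
    exact ⟨p, Finset.mem_filter.mpr ⟨Finset.mem_univ p, hp⟩⟩
  obtain ⟨fp, hfp⟩ : ∃ fp : Fin n → Fin w.length,
      ∀ v, w.get (fp v) = v ∧ (∀ p, w.get p = v → fp v ≤ p) := by
    refine ⟨fun v => Finset.min' _ (hne v), fun v => ⟨?_, fun p hp => ?_⟩⟩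
    · exact (Finset.mem_filter.mp (Finset.min'_mem _ (hne v))).2
    · exact Finset.min'_le _ p (Finset.mem_filter.mpr ⟨Finset.mem_univ p, hp⟩)
  obtain ⟨lp, hlp⟩ : ∃ lp : Fin n → Fin w.length,
      ∀ v, w.get (lp v) = v ∧ (∀ p, w.get p = v → p ≤ lp v) := by
    refine ⟨fun v => Finset.max' _ (hne v), fun v => ⟨?_, fun p hp => ?_⟩⟩
    · exact (Finset.mem_filter.mp (Finset.max'_mem _ (hne v))).2
    · exact Finset.le_max' _ p (Finset.mem_filter.mpr ⟨Finset.mem_univ p, hp⟩)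
  have hfl : ∀ v, fp v ≤ lp v := fun v => (hlp v).2 _ (hfp v).1
  have no321 : ∀ p q r : Fin w.length,
      p < q → q < r → w.get r < w.get q → w.get q < w.get p → False :=
    fun p q r h1 h2 h3 h4 => hA ⟨p, q, r, h1, h2, h3, h4⟩
  have hdist : ∀ (u v : Fin n) (p q : Fin w.length),
      u ≠ v → w.get p = u → w.get q = v → p ≠ q := by
    intro u v p q huv hp hq heq
    exact huv (hp ▸ hq ▸ congrArg w.get heq)
  have adj_iff : ∀ u v : Fin n, u < v → (H.Adj u v ↔ lp v < fp u) := by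
    intro u v huv
    rw [(hR.2 u v huv)]
    constructor
    · intro hEB
      exact hEB (lp v) (fp u) (hlp v).1 (hfp u).1
    · intro h p q hp hq
      calc p ≤ lp v := (hlp v).2 p hp
        _ < fp u := h
        _ ≤ q := (hfp u).2 q hq
  -- sources and isolated vertices
  set Src : Fin n → Prop := fun v => ∃ u, u < v ∧ H.Adj u v with hSrc_def
  set Isol : Fin n → Prop := fun v => ∀ u, ¬ H.Adj v u with hIsol_def
  have hAdjNotSrc : ∀ u v : Fin n, u < v → H.Adj u v → ¬ Src u := by
    rintro u v huv hadj ⟨t, htu, hadj'⟩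
    have h1 : lp v < fp u := (adj_iff u v huv).mp hadj
    have h2 : lp u < fp t := (adj_iff t u htu).mp hadj'
    refine no321 (fp v) (fp u) (fp t) (lt_of_le_of_lt (hfl v) h1) (lt_of_le_of_lt (hfl u) h2) ?_ ?_
    · rw [(hfp t).1, (hfp u).1]; exact htu
    · rw [(hfp u).1, (hfp v).1]; exact huv
  have hF3 : ∀ u v : Fin n, Src u → u < v → lp u < lp v := by
    rintro u v ⟨t, htu, hadj⟩ huv
    have h1 : lp u < fp t := (adj_iff t u htu).mp hadj
    by_contra hcon
    have hne' : lp v ≠ lp u := by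
      intro h
      exact (hdist v u (lp v) (lp u) (ne_of_gt huv) (hlp v).1 (hlp u).1) h
    have h2 : lp v < lp u := lt_of_le_of_ne (not_lt.mp hcon) hne'
    refine no321 (lp v) (lp u) (fp t) h2 h1 ?_ ?_
    · rw [(hfp t).1, (hlp u).1]; exact htu
    · rw [(hlp u).1, (hlp v).1]; exact huv
  have hF4 : ∀ u v : Fin n, Src u → u < v → lp u < fp v := by
    rintro u v ⟨t, htu, hadj⟩ huv
    have h1 : lp u < fp t := (adj_iff t u htu).mp hadj
    by_contra hcon
    have hne' : fp v ≠ lp u := by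
      intro h
      exact (hdist v u (fp v) (lp u) (ne_of_gt huv) (hfp v).1 (hlp u).1) h
    have h2 : fp v < lp u := lt_of_le_of_ne (not_lt.mp hcon) hne'
    refine no321 (fp v) (lp u) (fp t) h2 h1 ?_ ?_
    · rw [(hfp t).1, (hlp u).1]; exact htu
    · rw [(hlp u).1, (hfp v).1]; exact huv
  have hK : ∀ u v : Fin n, u < v → ¬ Src v → ¬ Isol v → fp u < fp v := by
    intro u v huv hsv hiv
    have hexists : ∃ t, H.Adj v t := not_forall_not.mp hiv
    obtain ⟨t, hadj⟩ := hexists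
    have hvt : v < t := by
      rcases lt_trichotomy v t with h | h | h
      · exact h
      · exact absurd (h ▸ hadj) (H.irrefl)
      · exact absurd ⟨t, h, hadj.symm⟩ hsv
    have h1 : lp t < fp v := (adj_iff v t hvt).mp hadj
    by_contra hcon
    have hne' : fp v ≠ fp u := by
      intro h
      exact (hdist v u (fp v) (fp u) (ne_of_gt huv) (hfp v).1 (hfp u).1) h
    have h2 : fp v < fp u := lt_of_le_of_ne (not_lt.mp hcon) hne'
    refine no321 (lp t) (fp v) (fp u) h1 h2 ?_ ?_
    · rw [(hfp u).1, (hfp v).1]; exact huv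
    · rw [(hfp v).1, (hlp t).1]; exact hvt
  -- the two linear orders
  set kA : Fin n → ℕ := fun v => if Src v then (lp v).val else (fp v).val with hkA_def
  have hkA_inj : ∀ a b, kA a = kA b → a = b := by
    intro a b hab
    have hga : w.get (if Src a then lp a else fp a) = a := by
      by_cases h : Src a
      · rw [if_pos h]; exact (hlp a).1
      · rw [if_neg h]; exact (hfp a).1
    have hgb : w.get (if Src b then lp b else fp b) = b := by
      by_cases h : Src b
      · rw [if_pos h]; exact (hlp b).1
      · rw [if_neg h]; exact (hfp b).1
    have : (if Src a then lp a else fp a) = (if Src b then lp b else fp b) := by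
      apply Fin.ext
      simpa [hkA_def, apply_ite Fin.val] using hab
    rw [← hga, ← hgb, this]
  have hval_inj : ∀ a b : Fin n, a.val = b.val → a = b := fun a b h => Fin.ext h
  set A : Fin n → Fin n → Prop := Rel2 Isol kA with hA_def
  set B : Fin n → Fin n → Prop := Rel2 Isol (fun v => v.val) with hB_def
  obtain ⟨eA, heA⟩ := exists_rank A (rel2_trans Isol kA) (rel2_irrefl Isol kA)
    (rel2_total Isol kA hkA_inj)
  obtain ⟨eB, heB⟩ := exists_rank B (rel2_trans Isol _) (rel2_irrefl Isol _)
    (rel2_total Isol _ hval_inj)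
  -- the central equivalence
  have hMAIN' : ∀ x y : Fin n, x < y →
      (H.Adj x y ↔ ((A x y ∧ B y x) ∨ (A y x ∧ B x y))) := by
    intro x y hxy
    have hxyv : x.val < y.val := hxy
    have hnyx : ¬ y.val < x.val := by omega
    by_cases ix : Isol x <;> by_cases iy : Isol y
    · -- both isolated : no edge, orders agree (by label in both)
      constructor
      · intro hadj; exact absurd hadj (ix y)
      · rintro (⟨hA1, hB1⟩ | ⟨hA1, hB1⟩)
        · rcases hB1 with ⟨h1, h2, h3⟩ | ⟨h1, h2⟩ | ⟨h1, h2, h3⟩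
          · exact absurd iy h1
          · exact absurd iy h1
          · exact absurd (Fin.lt_def.mpr h3) (lt_asymm hxy)
        · rcases hA1 with ⟨h1, h2, h3⟩ | ⟨h1, h2⟩ | ⟨h1, h2, h3⟩
          · exact absurd iy h1
          · exact absurd iy h1
          · exact absurd (Fin.lt_def.mpr h3) (lt_asymm hxy)
    · -- x isolated, y not : no edge; both orders put y first
      constructor
      · intro hadj; exact absurd hadj (ix y)
      · rintro (⟨hA1, hB1⟩ | ⟨hA1, hB1⟩)
        · rcases hA1 with ⟨h1, h2, h3⟩ | ⟨h1, h2⟩ | ⟨h1, h2, h3⟩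
          · exact absurd ix h1
          · exact absurd ix h1
          · exact absurd h2 iy
        · rcases hB1 with ⟨h1, h2, h3⟩ | ⟨h1, h2⟩ | ⟨h1, h2, h3⟩
          · exact absurd ix h1
          · exact absurd ix h1
          · exact absurd h2 iy
    · -- y isolated, x not : no edge; both orders put x first
      constructor
      · intro hadj; exact absurd hadj.symm (iy x)
      · rintro (⟨hA1, hB1⟩ | ⟨hA1, hB1⟩)
        · rcases hB1 with ⟨h1, h2, h3⟩ | ⟨h1, h2⟩ | ⟨h1, h2, h3⟩
          · exact absurd iy h1
          · exact absurd iy h1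
          · exact absurd h2 ix
        · rcases hA1 with ⟨h1, h2, h3⟩ | ⟨h1, h2⟩ | ⟨h1, h2, h3⟩
          · exact absurd iy h1
          · exact absurd iy h1
          · exact absurd h2 ix
    · -- both non-isolated
      have hBxy : B x y := Or.inl ⟨ix, iy, hxyv⟩
      have hnByx : ¬ B y x := by
        rintro (⟨h1, h2, h3⟩ | ⟨h1, h2⟩ | ⟨h1, h2, h3⟩)
        · exact absurd (Fin.lt_def.mpr h3) (lt_asymm hxy)
        · exact absurd h2 ix
        · exact absurd h1 iy
      have hkApos : ∀ v, Src v → kA v = (lp v).val := by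
        intro v h; rw [hkA_def]; simp only [if_pos h]
      have hkAneg : ∀ v, ¬ Src v → kA v = (fp v).val := by
        intro v h; rw [hkA_def]; simp only [if_neg h]
      have key : H.Adj x y ↔ kA y < kA x := by
        by_cases sy : Src y
        · by_cases sx : Src x
          · constructor
            · intro hadj; exact absurd sx (hAdjNotSrc x y hxy hadj)
            · intro hlt
              have h3 := Fin.lt_def.mp (hF3 x y sx hxy)
              rw [hkApos x sx, hkApos y sy] at hlt
              omega
          · rw [adj_iff x y hxy, hkApos y sy, hkAneg x sx]
            exact Fin.lt_def
        · constructor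
          · intro hadj
            exact absurd ⟨x, hxy, hadj⟩ sy
          · intro hlt
            exfalso
            rw [hkAneg y sy] at hlt
            by_cases sx : Src x
            · have h4 := Fin.lt_def.mp (hF4 x y sx hxy)
              rw [hkApos x sx] at hlt
              omega
            · have h5 := Fin.lt_def.mp (hK x y hxy sy iy)
              rw [hkAneg x sx] at hlt
              omega
      rw [key]
      constructor
      · intro hlt
        exact Or.inr ⟨Or.inl ⟨iy, ix, hlt⟩, hBxy⟩
      · rintro (⟨hA1, hB1⟩ | ⟨hA1, hB1⟩)
        · exact absurd hB1 hnByx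
        · rcases hA1 with ⟨h1, h2, h3⟩ | ⟨h1, h2⟩ | ⟨h1, h2, h3⟩
          · exact h3
          · exact absurd h2 ix
          · exact absurd h1 iy
  have hMAIN : ∀ x y : Fin n,
      H.Adj x y ↔ (x ≠ y ∧ ((A x y ∧ B y x) ∨ (A y x ∧ B x y))) := by
    intro x y
    rcases lt_trichotomy x y with h | rfl | h
    · rw [hMAIN' x y h]
      exact ⟨fun hd => ⟨ne_of_lt h, hd⟩, fun h2 => h2.2⟩
    · constructor
      · intro hadj; exact absurd hadj (H.irrefl)
      · rintro ⟨hne, -⟩; exact absurd rfl hne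
    · rw [SimpleGraph.adj_comm, hMAIN' y x h]
      constructor
      · intro hd; exact ⟨ne_of_gt h, hd.symm⟩
      · rintro ⟨-, hd⟩; exact hd.symm
  constructor
  · refine ⟨eB.symm.trans eA, eA, fun x y => ?_⟩
    rw [hMAIN x y]
    simp only [PermGraph, SimpleGraph.fromRel_adj, Equiv.symm_trans_apply,
      Equiv.symm_symm, Equiv.symm_apply_apply]
    constructor
    · rintro ⟨hne, hd⟩
      refine ⟨fun h => hne (eA.injective h), ?_⟩
      rcases hd with ⟨h1, h2⟩ | ⟨h1, h2⟩
      · exact Or.inl ⟨(heA x y).mp h1, (heB y x).mp h2⟩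
      · exact Or.inr ⟨(heA y x).mp h1, (heB x y).mp h2⟩
    · rintro ⟨hne, hd⟩
      refine ⟨fun h => hne (congrArg eA h), ?_⟩
      rcases hd with ⟨h1, h2⟩ | ⟨h1, h2⟩
      · exact Or.inl ⟨(heA x y).mpr h1, (heB y x).mpr h2⟩
      · exact Or.inr ⟨(heA y x).mpr h1, (heB x y).mpr h2⟩
  · refine ⟨fun v => if Src v then 0 else 1, fun x y hadj => ?_⟩
    rcases lt_trichotomy x y with h | rfl | h
    · have hsy : Src y := ⟨x, h, hadj⟩
      have hsx : ¬ Src x := hAdjNotSrc x y h hadj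
      simp [hsx, hsy]
    · exact absurd hadj (H.irrefl)
    · have hsx : Src x := ⟨y, h, hadj.symm⟩
      have hsy : ¬ Src y := hAdjNotSrc y x h hadj.symm
      simp [hsx, hsy]

theorem stmt_10 (n : ℕ) (G : SimpleGraph (Fin n)) :
    (∃ σ : Equiv.Perm (Fin n), ∃ w : List (Fin n),
      Avoids321F w ∧ RepF (G.map σ.toEmbedding) w) ↔
    ((∃ π : Equiv.Perm (Fin n), Nonempty (G ≃g PermGraph π)) ∧ G.Colorable 2) := by
  constructor
  · rintro ⟨σ, w, hA, hRep⟩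
    obtain ⟨⟨π, e, hiso⟩, ⟨C, hC⟩⟩ := forward_aux (G.map σ.toEmbedding) w hA hRep
    have hmap : ∀ u v : Fin n, (G.map σ.toEmbedding).Adj (σ u) (σ v) ↔ G.Adj u v := by
      intro u v
      simp only [SimpleGraph.map_adj, Equiv.coe_toEmbedding]
      constructor
      · rintro ⟨-, a, b, hab, ha, hb⟩
        rwa [σ.injective ha, σ.injective hb] at hab
      · intro h
        exact ⟨fun h' => G.ne_of_adj h (σ.injective h'), u, v, h, rfl, rfl⟩
    constructor
    · refine ⟨π, ⟨⟨σ.trans e, fun {a b} => ?_⟩⟩⟩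
      show (PermGraph π).Adj (e (σ a)) (e (σ b)) ↔ G.Adj a b
      rw [← hiso (σ a) (σ b), hmap a b]
    · exact ⟨SimpleGraph.Coloring.mk (fun v => C (σ v))
        (fun {u v} h => hC (σ u) (σ v) ((hmap u v).mpr h))⟩
  · rintro ⟨⟨π, ⟨e⟩⟩, hcol⟩
    classical
    have hlen : (List.ofFn ⇑π).length = n := List.length_ofFn
    have hget : ∀ p : Fin (List.ofFn ⇑π).length,
        (List.ofFn ⇑π).get p = π (Fin.cast hlen p) := fun p => List.get_ofFn ⇑π p
    have hGP : ∀ a b : Fin n, (G.map e.toEquiv.toEmbedding).Adj a b ↔ (PermGraph π).Adj a b := by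
      intro a b
      simp only [SimpleGraph.map_adj, Equiv.coe_toEmbedding]
      constructor
      · rintro ⟨-, u, v, huv, rfl, rfl⟩
        exact e.map_adj_iff.mpr huv
      · intro h
        refine ⟨(PermGraph π).ne_of_adj h, e.symm a, e.symm b, e.symm.map_adj_iff.mpr h, ?_, ?_⟩ <;> simp
    refine ⟨e.toEquiv, List.ofFn ⇑π, ?_, ?_, ?_⟩
    · -- 321-avoidance from 2-colorability
      rintro ⟨p, q, r, hpq, hqr, h1, h2⟩
      obtain ⟨C⟩ := hcol
      rw [hget q, hget r] at h1
      rw [hget p, hget q] at h2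
      set x := π (Fin.cast hlen r) with hx
      set y := π (Fin.cast hlen q) with hy
      set z := π (Fin.cast hlen p) with hz
      have hsx : π.symm x = Fin.cast hlen r := by rw [hx, Equiv.symm_apply_apply]
      have hsy : π.symm y = Fin.cast hlen q := by rw [hy, Equiv.symm_apply_apply]
      have hsz : π.symm z = Fin.cast hlen p := by rw [hz, Equiv.symm_apply_apply]
      have hqr' : (Fin.cast hlen q : Fin n) < Fin.cast hlen r := by
        rw [Fin.lt_def]; exact hqr
      have hpq' : (Fin.cast hlen p : Fin n) < Fin.cast hlen q := by
        rw [Fin.lt_def]; exact hpq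
      have hpr' : (Fin.cast hlen p : Fin n) < Fin.cast hlen r := lt_trans hpq' hqr'
      have adjxy : (PermGraph π).Adj x y := by
        rw [PermGraph, SimpleGraph.fromRel_adj]
        exact ⟨ne_of_lt h1, Or.inl ⟨h1, by rw [hsx, hsy]; exact hqr'⟩⟩
      have adjyz : (PermGraph π).Adj y z := by
        rw [PermGraph, SimpleGraph.fromRel_adj]
        exact ⟨ne_of_lt h2, Or.inl ⟨h2, by rw [hsy, hsz]; exact hpq'⟩⟩
      have adjxz : (PermGraph π).Adj x z := by
        rw [PermGraph, SimpleGraph.fromRel_adj]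
        exact ⟨ne_of_lt (lt_trans h1 h2), Or.inl ⟨lt_trans h1 h2, by rw [hsx, hsz]; exact hpr'⟩⟩
      have hD : ∀ u v : Fin n, (PermGraph π).Adj u v → C (e.symm u) ≠ C (e.symm v) :=
        fun u v h => C.valid (e.symm.map_adj_iff.mpr h)
      have d1 := hD x y adjxy
      have d2 := hD y z adjyz
      have d3 := hD x z adjxz
      have v1 : (C (e.symm x)).val < 2 := (C (e.symm x)).isLt
      have v2 : (C (e.symm y)).val < 2 := (C (e.symm y)).isLt
      have v3 : (C (e.symm z)).val < 2 := (C (e.symm z)).isLt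
      have n1 : (C (e.symm x)).val ≠ (C (e.symm y)).val := fun h => d1 (Fin.ext h)
      have n2 : (C (e.symm y)).val ≠ (C (e.symm z)).val := fun h => d2 (Fin.ext h)
      have n3 : (C (e.symm x)).val ≠ (C (e.symm z)).val := fun h => d3 (Fin.ext h)
      omega
    · intro i
      rw [List.mem_ofFn]
      exact ⟨π.symm i, π.apply_symm_apply i⟩
    · intro i j hij
      rw [hGP i j, PermGraph, SimpleGraph.fromRel_adj]
      constructor
      · rintro ⟨hne, h | h⟩
        · intro p q hp hq
          rw [hget p] at hp
          rw [hget q] at hq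
          have hp' : Fin.cast hlen p = π.symm j := by
            apply π.injective; rw [hp, Equiv.apply_symm_apply]
          have hq' : Fin.cast hlen q = π.symm i := by
            apply π.injective; rw [hq, Equiv.apply_symm_apply]
          have : (π.symm j).val < (π.symm i).val := h.2
          rw [Fin.lt_def]
          have e1 : (p : ℕ) = (π.symm j).val := by rw [← hp']; rfl
          have e2 : (q : ℕ) = (π.symm i).val := by rw [← hq']; rfl
          omega
        · exact absurd h.1 (not_lt.mpr (le_of_lt hij))
      · intro hEB
        refine ⟨ne_of_lt hij, Or.inl ⟨hij, ?_⟩⟩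
        have hcast : ∀ v : Fin n, Fin.cast hlen (Fin.cast hlen.symm v) = v :=
          fun v => Fin.ext rfl
        have h1 : (List.ofFn ⇑π).get (Fin.cast hlen.symm (π.symm j)) = j := by
          rw [hget, hcast, Equiv.apply_symm_apply]
        have h2 : (List.ofFn ⇑π).get (Fin.cast hlen.symm (π.symm i)) = i := by
          rw [hget, hcast, Equiv.apply_symm_apply]
        have := hEB _ _ h1 h2
        rw [Fin.lt_def] at this ⊢
        exact this
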